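/- The linear map φ : G → U(L_H) defined on the basis of Heisenberg-Weyl diagrams by φ(Γ) = (a†)^{|Γ⁺|} a^{|Γ⁻|} e^{|Γ⁰|} is multiplicative: φ(Γ₂ * Γ₁) = φ(Γ₂)·φ(Γ₁), where Γ₂ * Γ₁ = Σ_m Γ₂ ◁_m Γ₁ is the sum over all matchings m of incoming lines of Γ₂ with outgoing lines of Γ₁. -/

import Mathlib

/-- Relations of the enveloping algebra `U(L_H)` of the Heisenberg Lie algebra:
generators `0 ↦ a†`, `1 ↦ a`, `2 ↦ e` with `a·a† = a†·a + e`, `e` central. -/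
inductive HRel (K : Type) [CommRing K] :
    FreeAlgebra K (Fin 3) → FreeAlgebra K (Fin 3) → Prop
  | a_ad : HRel K (FreeAlgebra.ι K 1 * FreeAlgebra.ι K 0)
      (FreeAlgebra.ι K 0 * FreeAlgebra.ι K 1 + FreeAlgebra.ι K 2)
  | e_ad : HRel K (FreeAlgebra.ι K 2 * FreeAlgebra.ι K 0)
      (FreeAlgebra.ι K 0 * FreeAlgebra.ι K 2)
  | e_a : HRel K (FreeAlgebra.ι K 2 * FreeAlgebra.ι K 1)
      (FreeAlgebra.ι K 1 * FreeAlgebra.ι K 2)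

/-- The enveloping algebra `U(L_H)`. -/
abbrev UH (K : Type) [CommRing K] := RingQuot (HRel K)

/-- The creation generator `a†` of `U(L_H)`. -/
noncomputable def uad (K : Type) [CommRing K] : UH K :=
  RingQuot.mkAlgHom K (HRel K) (FreeAlgebra.ι K 0)

/-- The annihilation generator `a` of `U(L_H)`. -/
noncomputable def ua (K : Type) [CommRing K] : UH K :=
  RingQuot.mkAlgHom K (HRel K) (FreeAlgebra.ι K 1)

/-- The central generator `e` of `U(L_H)`. -/
noncomputable def ue (K : Type) [CommRing K] : UH K :=
  RingQuot.mkAlgHom K (HRel K) (FreeAlgebra.ι K 2)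


/-- A partially defined directed graph: finitely many edges, each with an optional
head and an optional tail attachment to vertices. -/
structure PGraph where
  V : Type
  E : Type
  [fE : Fintype E]
  [dE : DecidableEq E]
  head : E → Option V
  tail : E → Option V

attribute [instance] PGraph.fE PGraph.dE

namespace PGraph

/-- `Γ` is a Heisenberg-Weyl diagram: every edge has at least one attached endpoint
(totality) and there is no cycle of edges `e₁,…,eₙ` with `head eₖ = tail eₖ₊₁`
(acyclicity, phrased via the transitive closure of the edge-adjacency relation). -/
def IsHW (Γ : PGraph) : Prop :=
  (∀ e : Γ.E, (Γ.head e).isSome ∨ (Γ.tail e).isSome) ∧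
  ∀ e : Γ.E, ¬ Relation.TransGen
      (fun e₁ e₂ => ∃ v, Γ.head e₁ = some v ∧ Γ.tail e₂ = some v) e e

/-- Number of outgoing lines (free head, attached tail). -/
def outCount (Γ : PGraph) : ℕ :=
  (Finset.univ.filter (fun e : Γ.E => (Γ.head e).isNone ∧ (Γ.tail e).isSome)).card

/-- Number of incoming lines (free tail, attached head). -/
def inCount (Γ : PGraph) : ℕ :=
  (Finset.univ.filter (fun e : Γ.E => (Γ.tail e).isNone ∧ (Γ.head e).isSome)).card

/-- Number of inner lines (both ends attached). -/
def innerCount (Γ : PGraph) : ℕ :=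
  (Finset.univ.filter (fun e : Γ.E => (Γ.head e).isSome ∧ (Γ.tail e).isSome)).card

/-- Total number of lines. -/
def edgeCount (Γ : PGraph) : ℕ := Fintype.card Γ.E

/-- A matching between the incoming lines of `Γ₂` and the outgoing lines of `Γ₁`:
a set of pairs with distinct components, each pair consisting of an incoming line
of `Γ₂` and an outgoing line of `Γ₁`. -/
def IsMatching (Γ₂ Γ₁ : PGraph) (m : Finset (Γ₂.E × Γ₁.E)) : Prop :=
  (∀ p ∈ m, (Γ₂.tail p.1).isNone ∧ (Γ₁.head p.2).isNone) ∧
  (∀ p ∈ m, ∀ q ∈ m, (p.1 = q.1 ∨ p.2 = q.2) → p = q)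

/-- The composition `Γ₂ ◁_m Γ₁` of diagrams along a matching `m`: disjoint union of
vertices; unmatched edges kept; each matched pair glued into a single edge whose head
is taken in `Γ₂` and whose tail is taken in `Γ₁`. -/
def glue (Γ₂ Γ₁ : PGraph) (m : Finset (Γ₂.E × Γ₁.E)) : PGraph where
  V := Γ₂.V ⊕ Γ₁.V
  E := {e : Γ₂.E ⊕ Γ₁.E //
          e ∉ m.image (fun p => Sum.inl p.1) ∧ e ∉ m.image (fun p => Sum.inr p.2)}
        ⊕ {p : Γ₂.E × Γ₁.E // p ∈ m}
  head := fun e =>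
    match e with
    | Sum.inl ⟨Sum.inl e₂, _⟩ => (Γ₂.head e₂).map Sum.inl
    | Sum.inl ⟨Sum.inr e₁, _⟩ => (Γ₁.head e₁).map Sum.inr
    | Sum.inr ⟨p, _⟩ => (Γ₂.head p.1).map Sum.inl
  tail := fun e =>
    match e with
    | Sum.inl ⟨Sum.inl e₂, _⟩ => (Γ₂.tail e₂).map Sum.inl
    | Sum.inl ⟨Sum.inr e₁, _⟩ => (Γ₁.tail e₁).map Sum.inr
    | Sum.inr ⟨p, _⟩ => (Γ₁.tail p.2).map Sum.inr

/-- The subdiagram `Γ|_L` induced by a subset `L` of the edges. -/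
def restrict (Γ : PGraph) (L : Finset Γ.E) : PGraph where
  V := Γ.V
  E := {e : Γ.E // e ∈ L}
  head := fun e => Γ.head e.1
  tail := fun e => Γ.tail e.1

end PGraph

instance (Γ₂ Γ₁ : PGraph) (m : Finset (Γ₂.E × Γ₁.E)) :
    Decidable (PGraph.IsMatching Γ₂ Γ₁ m) := by
  unfold PGraph.IsMatching; infer_instance

/-- The forgetful map `φ` on basis diagrams: `φ(Γ) = (a†)^{|Γ⁺|} a^{|Γ⁻|} e^{|Γ⁰|}`. -/
noncomputable def phiEl (K : Type) [CommRing K] (Γ : PGraph) : UH K :=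
  uad K ^ Γ.outCount * ua K ^ Γ.inCount * ue K ^ Γ.innerCount



section HWAlg
variable (K : Type) [CommRing K]

lemma hw_ua_uad : ua K * uad K = uad K * ua K + ue K := by
  simpa [ua, uad, ue, map_mul, map_add] using RingQuot.mkAlgHom_rel K (HRel.a_ad (K := K))

lemma hw_comm_ue_uad : Commute (ue K) (uad K) := by
  have := RingQuot.mkAlgHom_rel K (HRel.e_ad (K := K))
  simpa [ua, uad, ue, map_mul, Commute, SemiconjBy] using this

lemma hw_comm_ue_ua : Commute (ue K) (ua K) := by
  have := RingQuot.mkAlgHom_rel K (HRel.e_a (K := K))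
  simpa [ua, uad, ue, map_mul, Commute, SemiconjBy] using this

lemma hw_ua_pow_uad (n : ℕ) :
    ua K ^ n * uad K = uad K * ua K ^ n + n • (ua K ^ (n - 1) * ue K) := by
  induction n with
  | zero => simp
  | succ n ih =>
    have h1 : ua K ^ (n + 1) * uad K = ua K * (ua K ^ n * uad K) := by
      rw [pow_succ', mul_assoc]
    rw [h1, ih, mul_add, ← mul_assoc, hw_ua_uad, add_mul, mul_assoc]
    cases n with
    | zero => simp
    | succ n =>
      have h2 : ua K * (ua K ^ (n + 1 - 1) * ue K) = ua K ^ (n + 1) * ue K := by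
        rw [Nat.add_sub_cancel, ← mul_assoc, ← pow_succ']
      rw [mul_smul_comm, h2, succ_nsmul]
      have h3 : ue K * ua K ^ (n+1) = ua K ^ (n+1) * ue K :=
        ((hw_comm_ue_ua K).pow_right _).eq
      rw [← pow_succ', Nat.add_sub_cancel, h3]
      simp only [succ_nsmul]
      abel

lemma descF_rec (k i : ℕ) :
    (k+1).descFactorial i = k.descFactorial i + i * k.descFactorial (i-1) := by
  cases i with
  | zero => simp
  | succ j =>
    rw [Nat.succ_descFactorial_succ, Nat.descFactorial_succ, Nat.succ_sub_one]
    rcases le_or_gt j k with h | h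
    · rw [← add_mul]; congr 1; omega
    · rw [Nat.descFactorial_eq_zero_iff_lt.2 h]; ring

lemma hw_step_term (k q i : ℕ) :
    (uad K ^ (k-i) * (ua K ^ (q-i) * ue K ^ i)) * uad K
      = uad K ^ (k-i+1) * (ua K ^ (q-i) * ue K ^ i)
        + (q-i) • (uad K ^ (k-i) * (ua K ^ (q-i-1) * ue K ^ (i+1))) := by
  have hc : ue K ^ i * uad K = uad K * ue K ^ i := ((hw_comm_ue_uad K).pow_left i).eq
  calc (uad K ^ (k-i) * (ua K ^ (q-i) * ue K ^ i)) * uad K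
      = uad K ^ (k-i) * ((ua K ^ (q-i) * uad K) * ue K ^ i) := by
        rw [mul_assoc, mul_assoc, mul_assoc, hc]
    _ = uad K ^ (k-i) * ((uad K * ua K ^ (q-i) + (q-i) • (ua K ^ (q-i-1) * ue K)) * ue K ^ i) := by
        rw [hw_ua_pow_uad]
    _ = uad K ^ (k-i+1) * (ua K ^ (q-i) * ue K ^ i)
        + (q-i) • (uad K ^ (k-i) * (ua K ^ (q-i-1) * ue K ^ (i+1))) := by
        rw [add_mul, mul_add, smul_mul_assoc, mul_smul_comm]
        congr 1
        · simp [pow_succ, mul_assoc]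
        · congr 1
          rw [mul_assoc, pow_succ']

lemma hw_main (q k : ℕ) :
    ua K ^ q * uad K ^ k =
      ∑ i ∈ Finset.range (q+1),
        ((q.choose i * k.descFactorial i : ℕ) : K) •
          (uad K ^ (k-i) * (ua K ^ (q-i) * ue K ^ i)) := by
  induction k with
  | zero =>
    rw [Finset.sum_eq_single 0]
    · simp
    · intro i _ hi
      obtain ⟨j, rfl⟩ := Nat.exists_eq_succ_of_ne_zero hi
      simp
    · simp
  | succ k ih =>
    have hstep : ua K ^ q * uad K ^ (k+1) = (ua K ^ q * uad K ^ k) * uad K := by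
      rw [pow_succ, mul_assoc]
    have hterm : ∀ i, (((q.choose i * k.descFactorial i : ℕ) : K) •
          (uad K ^ (k-i) * (ua K ^ (q-i) * ue K ^ i))) * uad K
        = ((q.choose i * k.descFactorial i : ℕ) : K) •
            (uad K ^ (k-i+1) * (ua K ^ (q-i) * ue K ^ i))
          + ((q.choose i * k.descFactorial i * (q-i) : ℕ) : K) •
              (uad K ^ (k-i) * (ua K ^ (q-i-1) * ue K ^ (i+1))) := by
      intro i
      rw [smul_mul_assoc, hw_step_term, smul_add]
      congr 1
      rw [← Nat.cast_smul_eq_nsmul K (q-i), smul_smul, ← Nat.cast_mul]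
    rw [hstep, ih, Finset.sum_mul]
    simp only [hterm]
    rw [Finset.sum_add_distrib]
    have hrhs : ∀ i, ((q.choose i * (k+1).descFactorial i : ℕ) : K) •
          (uad K ^ (k+1-i) * (ua K ^ (q-i) * ue K ^ i))
        = ((q.choose i * k.descFactorial i : ℕ) : K) •
            (uad K ^ (k+1-i) * (ua K ^ (q-i) * ue K ^ i))
          + ((q.choose i * (i * k.descFactorial (i-1)) : ℕ) : K) •
            (uad K ^ (k+1-i) * (ua K ^ (q-i) * ue K ^ i)) := by
      intro i
      rw [descF_rec, Nat.mul_add, Nat.cast_add, add_smul]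
    simp only [hrhs]
    rw [Finset.sum_add_distrib]
    congr 1
    · refine Finset.sum_congr rfl fun i _ => ?_
      rcases le_or_gt i k with h | h
      · rw [Nat.succ_sub h]
      · rw [Nat.descFactorial_eq_zero_iff_lt.2 h]
        simp
    · rw [Finset.sum_range_succ, Finset.sum_range_succ']
      simp only [Nat.sub_self, Nat.mul_zero, Nat.cast_zero, zero_smul, add_zero,
        Nat.zero_mul, Nat.mul_zero, Nat.choose_zero_right, zero_add]
      refine Finset.sum_congr rfl fun i _ => ?_
      have hc : q.choose i * k.descFactorial i * (q - i)
          = q.choose (i+1) * ((i+1) * k.descFactorial i) := by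
        rw [← mul_assoc, Nat.choose_succ_right_eq]; ring
      rw [hc, Nat.succ_sub_succ]
      congr 3
      omega

lemma hw_key (p q r k l mm : ℕ) :
    (uad K^p * ua K^q * ue K^r) * (uad K^k * ua K^l * ue K^mm) =
      ∑ i ∈ Finset.range (q+1), ((q.choose i * k.descFactorial i : ℕ) : K) •
        (uad K^(p+(k-i)) * ua K^((q-i)+l) * ue K^((r+mm)+i)) := by
  have c1 : ∀ s t : ℕ, ue K ^ s * uad K ^ t = uad K ^ t * ue K ^ s :=
    fun s t => ((hw_comm_ue_uad K).pow_pow s t).eq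
  have c2 : ∀ s t : ℕ, ue K ^ s * ua K ^ t = ua K ^ t * ue K ^ s :=
    fun s t => ((hw_comm_ue_ua K).pow_pow s t).eq
  have h1 : (uad K^p * ua K^q * ue K^r) * (uad K^k * ua K^l * ue K^mm)
      = uad K^p * ((ua K^q * uad K^k) * (ua K^l * ue K^(r+mm))) := by
    simp only [mul_assoc]
    rw [← mul_assoc (ue K^r), c1, mul_assoc, ← mul_assoc (ue K^r), c2, mul_assoc, ← pow_add]
  rw [h1, hw_main K q k, Finset.sum_mul, Finset.mul_sum]
  refine Finset.sum_congr rfl fun i _ => ?_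
  rw [smul_mul_assoc, mul_smul_comm]
  congr 1
  simp only [pow_add, mul_assoc]
  congr 2
  rw [← mul_assoc (ue K^i), c2, mul_assoc]
  simp only [← pow_add]
  congr 3
  omega

end HWAlg

section Cnt
open Finset
lemma count_fiber {α β : Type} [Fintype α] [DecidableEq α] [Fintype β] [DecidableEq β]
    (A : Finset α) (B : Finset β) (i : ℕ) (s : Finset α) (hsA : s ⊆ A) (hsc : s.card = i) :
    ((Finset.univ.filter (fun m : Finset (α × β) =>
       ((∀ p ∈ m, p.1 ∈ A ∧ p.2 ∈ B) ∧
        (∀ p ∈ m, ∀ q ∈ m, (p.1 = q.1 ∨ p.2 = q.2) → p = q)) ∧ m.card = i)).filter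
        (fun m => m.image Prod.fst = s)).card
     = B.card.descFactorial i := by
  classical
  set Φ : ({x // x ∈ s} ↪ {y // y ∈ B}) → Finset (α × β) :=
    fun f => s.attach.image (fun x => (x.1, (f x).1)) with hΦ
  have hΦinj : Function.Injective Φ := by
    intro f g h
    apply DFunLike.ext
    intro x
    have hx : (x.1, (f x).1) ∈ Φ g := by
      rw [← h]; exact mem_image_of_mem _ (mem_attach _ _)
    obtain ⟨x', -, hx'⟩ := mem_image.1 hx
    have h1 : x' = x := Subtype.ext (congrArg Prod.fst hx')
    subst h1
    exact Subtype.ext (congrArg Prod.snd hx').symm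
  have hset : ((Finset.univ.filter (fun m : Finset (α × β) =>
       ((∀ p ∈ m, p.1 ∈ A ∧ p.2 ∈ B) ∧
        (∀ p ∈ m, ∀ q ∈ m, (p.1 = q.1 ∨ p.2 = q.2) → p = q)) ∧ m.card = i)).filter
        (fun m => m.image Prod.fst = s)) = Finset.image Φ Finset.univ := by
    ext m
    simp only [mem_filter, mem_univ, true_and, mem_image]
    constructor
    · rintro ⟨⟨⟨hmem, hinj⟩, hcard⟩, himg⟩
      have hex : ∀ x : {x // x ∈ s}, ∃ y, (x.1, y) ∈ m := by
        intro x
        have hx : x.1 ∈ m.image Prod.fst := by rw [himg]; exact x.2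
        obtain ⟨p, hp, hfst⟩ := mem_image.1 hx
        exact ⟨p.2, by rw [← hfst, Prod.mk.eta]; exact hp⟩
      choose y hy using hex
      refine ⟨⟨fun x => ⟨y x, (hmem _ (hy x)).2⟩, ?_⟩, ?_⟩
      · intro x x' hxy
        have h2 : y x = y x' := congrArg Subtype.val hxy
        have := hinj _ (hy x) _ (hy x') (Or.inr (by simpa using h2))
        exact Subtype.ext (congrArg Prod.fst this)
      · apply Finset.Subset.antisymm
        · intro p hp
          obtain ⟨x, -, rfl⟩ := mem_image.1 hp
          exact hy x
        · intro p hp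
          have hps : p.1 ∈ s := by rw [← himg]; exact mem_image_of_mem _ hp
          have hmem2 := hy ⟨p.1, hps⟩
          have hpe : p = (p.1, y ⟨p.1, hps⟩) := hinj p hp _ hmem2 (Or.inl rfl)
          rw [hpe]
          exact mem_image_of_mem _ (mem_attach _ ⟨p.1, hps⟩)
    · rintro ⟨f, rfl⟩
      have hmemΦ : ∀ p ∈ Φ f, ∃ x : {x // x ∈ s}, p = (x.1, (f x).1) := by
        intro p hp
        obtain ⟨x, -, rfl⟩ := mem_image.1 hp
        exact ⟨x, rfl⟩
      refine ⟨⟨⟨?_, ?_⟩, ?_⟩, ?_⟩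
      · intro p hp
        obtain ⟨x, rfl⟩ := hmemΦ p hp
        exact ⟨hsA x.2, (f x).2⟩
      · intro p hp q hq hor
        obtain ⟨x, rfl⟩ := hmemΦ p hp
        obtain ⟨x', rfl⟩ := hmemΦ q hq
        have hxx : x = x' := by
          rcases hor with h | h
          · exact Subtype.ext h
          · exact f.injective (Subtype.ext h)
        rw [hxx]
      · rw [Finset.card_image_of_injOn, Finset.card_attach, hsc]
        intro x _ x' _ h
        exact Subtype.ext (congrArg Prod.fst h)
      · rw [Finset.image_image]
        have : (Prod.fst ∘ fun x : {x // x ∈ s} => (x.1, (f x).1)) = Subtype.val := rfl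
        rw [this, Finset.attach_image_val]
  rw [hset, Finset.card_image_of_injective _ hΦinj, Finset.card_univ,
    Fintype.card_embedding_eq, Fintype.card_coe, Fintype.card_coe, hsc]

lemma count_matchings {α β : Type} [Fintype α] [DecidableEq α] [Fintype β] [DecidableEq β]
    (A : Finset α) (B : Finset β) (i : ℕ) :
    (Finset.univ.filter (fun m : Finset (α × β) =>
       ((∀ p ∈ m, p.1 ∈ A ∧ p.2 ∈ B) ∧
        (∀ p ∈ m, ∀ q ∈ m, (p.1 = q.1 ∨ p.2 = q.2) → p = q)) ∧ m.card = i)).card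
     = A.card.choose i * B.card.descFactorial i := by
  classical
  rw [Finset.card_eq_sum_card_fiberwise
    (f := fun m : Finset (α × β) => m.image Prod.fst) (t := A.powersetCard i) ?_]
  · rw [Finset.sum_congr rfl (fun s hs => ?_), Finset.sum_const, Finset.card_powersetCard,
      smul_eq_mul]
    obtain ⟨hsA, hsc⟩ := Finset.mem_powersetCard.1 hs
    exact count_fiber A B i s hsA hsc
  · intro m hm
    obtain ⟨⟨hmem, hinj⟩, hcard⟩ := (Finset.mem_filter.1 hm).2
    rw [Finset.mem_coe, Finset.mem_powersetCard]
    constructor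
    · intro a ha
      obtain ⟨p, hp, rfl⟩ := mem_image.1 ha
      exact (hmem p hp).1
    · rw [Finset.card_image_of_injOn, hcard]
      intro p hp q hq h
      exact hinj p hp q hq (Or.inl h)

end Cnt

open Finset

lemma card_subtype_sum {α β : Type*} [Fintype α] [Fintype β] (p : α ⊕ β → Prop) [DecidablePred p] :
    Fintype.card {x : α ⊕ β // p x}
      = Fintype.card {a // p (Sum.inl a)} + Fintype.card {b // p (Sum.inr b)} := by
  rw [Fintype.card_congr (Equiv.subtypeSum), Fintype.card_sum]

namespace PGraph

variable (Γ₂ Γ₁ : PGraph) (m : Finset (Γ₂.E × Γ₁.E))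

lemma outCount_eq (Γ : PGraph) :
    Γ.outCount = Fintype.card {e : Γ.E // (Γ.head e).isNone ∧ (Γ.tail e).isSome} :=
  (Fintype.card_subtype _).symm

lemma inCount_eq (Γ : PGraph) :
    Γ.inCount = Fintype.card {e : Γ.E // (Γ.tail e).isNone ∧ (Γ.head e).isSome} :=
  (Fintype.card_subtype _).symm

lemma innerCount_eq (Γ : PGraph) :
    Γ.innerCount = Fintype.card {e : Γ.E // (Γ.head e).isSome ∧ (Γ.tail e).isSome} :=
  (Fintype.card_subtype _).symm

variable {Γ₂ Γ₁ m}
variable (hm : IsMatching Γ₂ Γ₁ m)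
    (ht₂ : ∀ e : Γ₂.E, (Γ₂.head e).isSome ∨ (Γ₂.tail e).isSome)
    (ht₁ : ∀ e : Γ₁.E, (Γ₁.head e).isSome ∨ (Γ₁.tail e).isSome)

set_option linter.unusedSectionVars false

include hm

lemma snd_injOn : Set.InjOn Prod.snd (m : Set (Γ₂.E × Γ₁.E)) := by
  intro p hp q hq h
  exact hm.2 p hp q hq (Or.inr h)

lemma fst_injOn : Set.InjOn Prod.fst (m : Set (Γ₂.E × Γ₁.E)) := by
  intro p hp q hq h
  exact hm.2 p hp q hq (Or.inl h)

include ht₂ ht₁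

lemma glue_outCount : (glue Γ₂ Γ₁ m).outCount = Γ₂.outCount + (Γ₁.outCount - m.card) := by
  classical
  refine (outCount_eq _).trans ?_
  refine (Fintype.card_congr Equiv.subtypeSum).trans ?_
  rw [Fintype.card_sum]
  have hr : Fintype.card {b : {p : Γ₂.E × Γ₁.E // p ∈ m} //
      (((glue Γ₂ Γ₁ m).head (Sum.inr b)).isNone ∧ ((glue Γ₂ Γ₁ m).tail (Sum.inr b)).isSome)} = 0 := by
    rw [Fintype.card_eq_zero_iff]
    constructor
    rintro ⟨⟨⟨e₂, e₁⟩, hmem⟩, hP⟩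
    have h1 : ((Γ₂.head e₂).map Sum.inl).isNone = true := hP.1
    have h2 : (Γ₂.tail e₂).isNone = true := (hm.1 _ hmem).1
    rcases ht₂ e₂ with h | h
    · simp [Option.isNone_iff_eq_none] at h1
      rw [h1] at h
      simp at h
    · rw [Option.isNone_iff_eq_none] at h2
      rw [h2] at h
      simp at h
  rw [hr, add_zero]
  set q : Γ₂.E ⊕ Γ₁.E → Prop := Sum.elim
    (fun e₂ => ((Γ₂.head e₂).isNone : Prop) ∧ ((Γ₂.tail e₂).isSome : Prop))
    (fun e₁ => ((Γ₁.head e₁).isNone : Prop) ∧ ((Γ₁.tail e₁).isSome : Prop)) with hq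
  have e1 : ∀ a : {e : Γ₂.E ⊕ Γ₁.E //
        e ∉ m.image (fun p => Sum.inl p.1) ∧ e ∉ m.image (fun p => Sum.inr p.2)},
      (((glue Γ₂ Γ₁ m).head (Sum.inl a)).isNone ∧ ((glue Γ₂ Γ₁ m).tail (Sum.inl a)).isSome)
        ↔ q a.1 := by
    rintro ⟨e | e, h⟩ <;> simp [hq, glue]
  refine (Fintype.card_congr ((Equiv.subtypeEquivRight e1).trans
    (Equiv.subtypeSubtypeEquivSubtypeInter _ q))).trans ?_
  refine (Fintype.card_congr Equiv.subtypeSum).trans ?_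
  rw [Fintype.card_sum]
  congr 1
  · rw [outCount_eq]
    refine Fintype.card_congr (Equiv.subtypeEquivRight ?_)
    intro e₂
    simp only [hq, Sum.elim_inl]
    constructor
    · rintro ⟨-, h⟩; exact h
    · rintro ⟨h1, h2⟩
      refine ⟨⟨?_, by simp⟩, h1, h2⟩
      intro hmem'
      obtain ⟨p, hp, hpe⟩ := Finset.mem_image.1 hmem'
      have := (hm.1 p hp).1
      rw [Sum.inl_injective hpe] at this
      rw [Option.isNone_iff_eq_none] at this
      rw [this] at h2
      simp at h2
  · have himgsub : m.image Prod.snd ⊆ Finset.univ.filter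
        (fun e : Γ₁.E => ((Γ₁.head e).isNone : Prop) ∧ ((Γ₁.tail e).isSome : Prop)) := by
      intro e he
      obtain ⟨p, hp, rfl⟩ := Finset.mem_image.1 he
      refine Finset.mem_filter.2 ⟨Finset.mem_univ _, (hm.1 p hp).2, ?_⟩
      rcases ht₁ p.2 with h | h
      · exfalso
        have h2 : (Γ₁.head p.2).isNone = true := (hm.1 p hp).2
        rw [Option.isNone_iff_eq_none] at h2
        rw [h2] at h
        simp at h
      · exact h
    have hiff : ∀ e : Γ₁.E,
        (((Sum.inr e : Γ₂.E ⊕ Γ₁.E) ∉ m.image (fun p => Sum.inl p.1) ∧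
            (Sum.inr e : Γ₂.E ⊕ Γ₁.E) ∉ m.image (fun p => Sum.inr p.2))
          ∧ q (Sum.inr e))
        ↔ e ∈ ((Finset.univ.filter
            (fun e : Γ₁.E => ((Γ₁.head e).isNone : Prop) ∧ ((Γ₁.tail e).isSome : Prop)))
           \ m.image Prod.snd) := by
      intro e
      simp only [hq, Sum.elim_inr, Finset.mem_filter, Finset.mem_univ, true_and,
        Finset.mem_sdiff, Finset.mem_image, not_exists]
      constructor
      · rintro ⟨⟨-, h2⟩, h3⟩
        exact ⟨h3, fun p hp => h2 p ⟨hp.1, by rw [hp.2]⟩⟩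
      · rintro ⟨h3, h2⟩
        exact ⟨⟨by simp, fun p hp => h2 p ⟨hp.1, Sum.inr_injective hp.2⟩⟩, h3⟩
    refine (Fintype.card_congr (Equiv.subtypeEquivRight hiff)).trans ?_
    rw [Fintype.card_coe, Finset.card_sdiff_of_subset himgsub,
      Finset.card_image_of_injOn (snd_injOn hm), outCount]



lemma glue_inCount : (glue Γ₂ Γ₁ m).inCount = (Γ₂.inCount - m.card) + Γ₁.inCount := by
  classical
  refine (inCount_eq _).trans ?_
  refine (Fintype.card_congr Equiv.subtypeSum).trans ?_
  rw [Fintype.card_sum]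
  have hr : Fintype.card {b : {p : Γ₂.E × Γ₁.E // p ∈ m} //
      (((glue Γ₂ Γ₁ m).tail (Sum.inr b)).isNone ∧ ((glue Γ₂ Γ₁ m).head (Sum.inr b)).isSome)} = 0 := by
    rw [Fintype.card_eq_zero_iff]
    constructor
    rintro ⟨⟨⟨e₂, e₁⟩, hmem⟩, hP⟩
    have h1 : ((Γ₁.tail e₁).map Sum.inr).isNone = true := hP.1
    have h2 : (Γ₁.head e₁).isNone = true := (hm.1 _ hmem).2
    rcases ht₁ e₁ with h | h
    · rw [Option.isNone_iff_eq_none] at h2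
      rw [h2] at h
      simp at h
    · simp [Option.isNone_iff_eq_none] at h1
      rw [h1] at h
      simp at h
  rw [hr, add_zero]
  set q : Γ₂.E ⊕ Γ₁.E → Prop := Sum.elim
    (fun e₂ => ((Γ₂.tail e₂).isNone : Prop) ∧ ((Γ₂.head e₂).isSome : Prop))
    (fun e₁ => ((Γ₁.tail e₁).isNone : Prop) ∧ ((Γ₁.head e₁).isSome : Prop)) with hq
  have e1 : ∀ a : {e : Γ₂.E ⊕ Γ₁.E //
        e ∉ m.image (fun p => Sum.inl p.1) ∧ e ∉ m.image (fun p => Sum.inr p.2)},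
      (((glue Γ₂ Γ₁ m).tail (Sum.inl a)).isNone ∧ ((glue Γ₂ Γ₁ m).head (Sum.inl a)).isSome)
        ↔ q a.1 := by
    rintro ⟨e | e, h⟩ <;> simp [hq, glue]
  refine (Fintype.card_congr ((Equiv.subtypeEquivRight e1).trans
    (Equiv.subtypeSubtypeEquivSubtypeInter _ q))).trans ?_
  refine (Fintype.card_congr Equiv.subtypeSum).trans ?_
  rw [Fintype.card_sum]
  congr 1
  · have himgsub : m.image Prod.fst ⊆ Finset.univ.filter
        (fun e : Γ₂.E => ((Γ₂.tail e).isNone : Prop) ∧ ((Γ₂.head e).isSome : Prop)) := by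
      intro e he
      obtain ⟨p, hp, rfl⟩ := Finset.mem_image.1 he
      refine Finset.mem_filter.2 ⟨Finset.mem_univ _, (hm.1 p hp).1, ?_⟩
      rcases ht₂ p.1 with h | h
      · exact h
      · exfalso
        have h2 : (Γ₂.tail p.1).isNone = true := (hm.1 p hp).1
        rw [Option.isNone_iff_eq_none] at h2
        rw [h2] at h
        simp at h
    have hiff : ∀ e : Γ₂.E,
        (((Sum.inl e : Γ₂.E ⊕ Γ₁.E) ∉ m.image (fun p => Sum.inl p.1) ∧
            (Sum.inl e : Γ₂.E ⊕ Γ₁.E) ∉ m.image (fun p => Sum.inr p.2))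
          ∧ q (Sum.inl e))
        ↔ e ∈ ((Finset.univ.filter
            (fun e : Γ₂.E => ((Γ₂.tail e).isNone : Prop) ∧ ((Γ₂.head e).isSome : Prop)))
           \ m.image Prod.fst) := by
      intro e
      simp only [hq, Sum.elim_inl, Finset.mem_filter, Finset.mem_univ, true_and,
        Finset.mem_sdiff, Finset.mem_image, not_exists]
      constructor
      · rintro ⟨⟨h2, -⟩, h3⟩
        exact ⟨h3, fun p hp => h2 p ⟨hp.1, by rw [hp.2]⟩⟩
      · rintro ⟨h3, h2⟩
        exact ⟨⟨fun p hp => h2 p ⟨hp.1, Sum.inl_injective hp.2⟩, by simp⟩, h3⟩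
    refine (Fintype.card_congr (Equiv.subtypeEquivRight hiff)).trans ?_
    rw [Fintype.card_coe, Finset.card_sdiff_of_subset himgsub,
      Finset.card_image_of_injOn (fst_injOn hm), inCount]
  · rw [inCount_eq]
    refine Fintype.card_congr (Equiv.subtypeEquivRight ?_)
    intro e₁
    simp only [hq, Sum.elim_inr]
    constructor
    · rintro ⟨-, h⟩; exact h
    · rintro ⟨h1, h2⟩
      refine ⟨⟨by simp, ?_⟩, h1, h2⟩
      intro hmem'
      obtain ⟨p, hp, hpe⟩ := Finset.mem_image.1 hmem'
      have := (hm.1 p hp).2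
      rw [Sum.inr_injective hpe] at this
      rw [Option.isNone_iff_eq_none] at this
      rw [this] at h2
      simp at h2

lemma glue_innerCount :
    (glue Γ₂ Γ₁ m).innerCount = (Γ₂.innerCount + Γ₁.innerCount) + m.card := by
  classical
  refine (innerCount_eq _).trans ?_
  refine (Fintype.card_congr Equiv.subtypeSum).trans ?_
  rw [Fintype.card_sum]
  have hr : Fintype.card {b : {p : Γ₂.E × Γ₁.E // p ∈ m} //
      (((glue Γ₂ Γ₁ m).head (Sum.inr b)).isSome ∧ ((glue Γ₂ Γ₁ m).tail (Sum.inr b)).isSome)}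
      = m.card := by
    have hall : ∀ b : {p : Γ₂.E × Γ₁.E // p ∈ m},
        (((glue Γ₂ Γ₁ m).head (Sum.inr b)).isSome ∧ ((glue Γ₂ Γ₁ m).tail (Sum.inr b)).isSome) := by
      rintro ⟨⟨e₂, e₁⟩, hmem⟩
      constructor
      · show ((Γ₂.head e₂).map Sum.inl).isSome = true
        rcases ht₂ e₂ with h | h
        · simpa using h
        · exfalso
          have h2 : (Γ₂.tail e₂).isNone = true := (hm.1 _ hmem).1
          rw [Option.isNone_iff_eq_none] at h2
          rw [h2] at h
          simp at h
      · show ((Γ₁.tail e₁).map Sum.inr).isSome = true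
        rcases ht₁ e₁ with h | h
        · exfalso
          have h2 : (Γ₁.head e₁).isNone = true := (hm.1 _ hmem).2
          rw [Option.isNone_iff_eq_none] at h2
          rw [h2] at h
          simp at h
        · simpa using h
    rw [Fintype.card_congr (Equiv.subtypeUnivEquiv hall), Fintype.card_coe]
  rw [hr]
  congr 1
  set q : Γ₂.E ⊕ Γ₁.E → Prop := Sum.elim
    (fun e₂ => ((Γ₂.head e₂).isSome : Prop) ∧ ((Γ₂.tail e₂).isSome : Prop))
    (fun e₁ => ((Γ₁.head e₁).isSome : Prop) ∧ ((Γ₁.tail e₁).isSome : Prop)) with hq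
  have e1 : ∀ a : {e : Γ₂.E ⊕ Γ₁.E //
        e ∉ m.image (fun p => Sum.inl p.1) ∧ e ∉ m.image (fun p => Sum.inr p.2)},
      (((glue Γ₂ Γ₁ m).head (Sum.inl a)).isSome ∧ ((glue Γ₂ Γ₁ m).tail (Sum.inl a)).isSome)
        ↔ q a.1 := by
    rintro ⟨e | e, h⟩ <;> simp [hq, glue]
  refine (Fintype.card_congr ((Equiv.subtypeEquivRight e1).trans
    (Equiv.subtypeSubtypeEquivSubtypeInter _ q))).trans ?_
  refine (Fintype.card_congr Equiv.subtypeSum).trans ?_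
  rw [Fintype.card_sum]
  congr 1
  · rw [innerCount_eq]
    refine Fintype.card_congr (Equiv.subtypeEquivRight ?_)
    intro e₂
    simp only [hq, Sum.elim_inl]
    constructor
    · rintro ⟨-, h⟩; exact h
    · rintro ⟨h1, h2⟩
      refine ⟨⟨?_, by simp⟩, h1, h2⟩
      intro hmem'
      obtain ⟨p, hp, hpe⟩ := Finset.mem_image.1 hmem'
      have := (hm.1 p hp).1
      rw [Sum.inl_injective hpe] at this
      rw [Option.isNone_iff_eq_none] at this
      rw [this] at h2
      simp at h2
  · rw [innerCount_eq]
    refine Fintype.card_congr (Equiv.subtypeEquivRight ?_)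
    intro e₁
    simp only [hq, Sum.elim_inr]
    constructor
    · rintro ⟨-, h⟩; exact h
    · rintro ⟨h1, h2⟩
      refine ⟨⟨by simp, ?_⟩, h1, h2⟩
      intro hmem'
      obtain ⟨p, hp, hpe⟩ := Finset.mem_image.1 hmem'
      have := (hm.1 p hp).2
      rw [Sum.inr_injective hpe] at this
      rw [Option.isNone_iff_eq_none] at this
      rw [this] at h1
      simp at h1

end PGraph


open PGraph in
/-- the linear map `φ : G → U(L_H)`, `φ(Γ) = (a†)^{|Γ⁺|} a^{|Γ⁻|} e^{|Γ⁰|}`,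
is multiplicative: on basis diagrams, `φ(Γ₂ * Γ₁) = φ(Γ₂)·φ(Γ₁)`, where
`Γ₂ * Γ₁ = Σ_m Γ₂ ◁_m Γ₁` is the sum over all matchings `m` between the incoming lines
of `Γ₂` and the outgoing lines of `Γ₁`. -/
theorem phi_multiplicative (K : Type) [Field K]
    (Γ₂ Γ₁ : PGraph) (h₂ : Γ₂.IsHW) (h₁ : Γ₁.IsHW) :
    ∑ m ∈ Finset.univ.filter (fun m : Finset (Γ₂.E × Γ₁.E) => IsMatching Γ₂ Γ₁ m),
        phiEl K (glue Γ₂ Γ₁ m)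
      = phiEl K Γ₂ * phiEl K Γ₁ := by
  classical
  obtain ⟨ht₂, -⟩ := h₂
  obtain ⟨ht₁, -⟩ := h₁
  set A : Finset Γ₂.E := Finset.univ.filter (fun e => ((Γ₂.tail e).isNone : Prop)) with hA
  set B : Finset Γ₁.E := Finset.univ.filter (fun e => ((Γ₁.head e).isNone : Prop)) with hB
  have hAq : A.card = Γ₂.inCount := by
    rw [hA, inCount]
    congr 1
    ext e
    simp only [Finset.mem_filter, Finset.mem_univ, true_and]
    refine ⟨fun h => ⟨h, ?_⟩, fun h => h.1⟩
    rcases ht₂ e with h' | h'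
    · exact h'
    · exfalso
      rw [Option.isNone_iff_eq_none] at h
      rw [h] at h'
      simp at h'
  have hBk : B.card = Γ₁.outCount := by
    rw [hB, outCount]
    congr 1
    ext e
    simp only [Finset.mem_filter, Finset.mem_univ, true_and]
    refine ⟨fun h => ⟨h, ?_⟩, fun h => h.1⟩
    rcases ht₁ e with h' | h'
    · exfalso
      rw [Option.isNone_iff_eq_none] at h
      rw [h] at h'
      simp at h'
    · exact h'
  have hmaps : ∀ m' ∈ Finset.univ.filter (fun m : Finset (Γ₂.E × Γ₁.E) => IsMatching Γ₂ Γ₁ m),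
      m'.card ∈ Finset.range (Γ₂.inCount + 1) := by
    intro m' hm'
    have hmm : IsMatching Γ₂ Γ₁ m' := (Finset.mem_filter.1 hm').2
    rw [Finset.mem_range, Nat.lt_succ_iff, ← hAq]
    calc m'.card = (m'.image Prod.fst).card :=
          (Finset.card_image_of_injOn (PGraph.fst_injOn hmm)).symm
      _ ≤ A.card := by
          apply Finset.card_le_card
          intro e he
          obtain ⟨pp, hp, rfl⟩ := Finset.mem_image.1 he
          rw [hA]
          exact Finset.mem_filter.2 ⟨Finset.mem_univ _, (hmm.1 pp hp).1⟩
  rw [← Finset.sum_fiberwise_of_maps_to hmaps]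
  have hrhs : phiEl K Γ₂ * phiEl K Γ₁
      = ∑ i ∈ Finset.range (Γ₂.inCount + 1),
          ((Γ₂.inCount.choose i * (Γ₁.outCount).descFactorial i : ℕ) : K) •
            (uad K ^ (Γ₂.outCount + (Γ₁.outCount - i)) *
              ua K ^ ((Γ₂.inCount - i) + Γ₁.inCount) *
              ue K ^ ((Γ₂.innerCount + Γ₁.innerCount) + i)) := by
    simp only [phiEl]
    exact hw_key K _ _ _ _ _ _
  rw [hrhs]
  refine Finset.sum_congr rfl fun i hi => ?_
  have hterm : ∀ m' ∈ (Finset.univ.filter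
        (fun m : Finset (Γ₂.E × Γ₁.E) => IsMatching Γ₂ Γ₁ m)).filter
        (fun m' => m'.card = i),
      phiEl K (glue Γ₂ Γ₁ m')
        = uad K ^ (Γ₂.outCount + (Γ₁.outCount - i)) *
            ua K ^ ((Γ₂.inCount - i) + Γ₁.inCount) *
            ue K ^ ((Γ₂.innerCount + Γ₁.innerCount) + i) := by
    intro m' hm'
    obtain ⟨hm'f, hm'c⟩ := Finset.mem_filter.1 hm'
    have hmm : IsMatching Γ₂ Γ₁ m' := (Finset.mem_filter.1 hm'f).2
    rw [phiEl, PGraph.glue_outCount hmm ht₂ ht₁, PGraph.glue_inCount hmm ht₂ ht₁,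
      PGraph.glue_innerCount hmm ht₂ ht₁, hm'c]
  rw [Finset.sum_congr rfl hterm, Finset.sum_const]
  have hcard : ((Finset.univ.filter
        (fun m : Finset (Γ₂.E × Γ₁.E) => IsMatching Γ₂ Γ₁ m)).filter
        (fun m' => m'.card = i)).card
      = Γ₂.inCount.choose i * (Γ₁.outCount).descFactorial i := by
    rw [Finset.filter_filter]
    rw [show (Finset.univ.filter (fun m : Finset (Γ₂.E × Γ₁.E) =>
        IsMatching Γ₂ Γ₁ m ∧ m.card = i))
      = Finset.univ.filter (fun m : Finset (Γ₂.E × Γ₁.E) =>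
        ((∀ p ∈ m, p.1 ∈ A ∧ p.2 ∈ B) ∧
          (∀ p ∈ m, ∀ q ∈ m, (p.1 = q.1 ∨ p.2 = q.2) → p = q)) ∧ m.card = i) from ?_]
    · rw [count_matchings A B i, hAq, hBk]
    · apply Finset.filter_congr
      intro m' _
      unfold PGraph.IsMatching
      simp only [hA, hB, Finset.mem_filter, Finset.mem_univ, true_and]
  rw [hcard, ← Nat.cast_smul_eq_nsmul K]
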